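/- Let α ∈ (0,1), β = √(1−α²), d > 0, and k > (8α+2β)/(9(αβ)^{3/2}). Then R((k/2)·√(β/α)) < 0, where R(s) = √(s²+k²)·tanh(d√(s²+k²)) + α s^{3/2} − β k²/√s. -/

import Mathlib

lemma my_tanh_le_one (x : ℝ) : Real.tanh x ≤ 1 := by
  rw [Real.tanh_eq_sinh_div_cosh]
  exact (div_le_one (Real.cosh_pos x)).mpr (Real.sinh_lt_cosh x).le

theorem stmt_4 (k d α : ℝ) (hd : 0 < d) (hα0 : 0 < α) (hα1 : α < 1)
    (β : ℝ) (hβ : β = Real.sqrt (1 - α ^ 2))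
    (hk : k > (8 * α + 2 * β) / (9 * (α * β) ^ ((3 : ℝ) / 2))) :
    Real.sqrt ((k / 2 * Real.sqrt (β / α)) ^ 2 + k ^ 2)
          * Real.tanh (d * Real.sqrt ((k / 2 * Real.sqrt (β / α)) ^ 2 + k ^ 2))
        + α * (k / 2 * Real.sqrt (β / α)) ^ ((3 : ℝ) / 2)
        - β * k ^ 2 / Real.sqrt (k / 2 * Real.sqrt (β / α)) < 0 := by
  have hβ0 : 0 < β := by
    rw [hβ]
    apply Real.sqrt_pos.mpr
    nlinarith
  have hab0 : 0 < α * β := mul_pos hα0 hβ0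
  have hrp : (α * β) ^ ((3 : ℝ) / 2) = α * β * (Real.sqrt α * Real.sqrt β) := by
    rw [show ((3:ℝ)/2) = 1 + 1/2 by norm_num, Real.rpow_add hab0, Real.rpow_one,
      ← Real.sqrt_eq_rpow, Real.sqrt_mul hα0.le]
  have ha0 : 0 < Real.sqrt α := Real.sqrt_pos.mpr hα0
  have hb0 : 0 < Real.sqrt β := Real.sqrt_pos.mpr hβ0
  have hasq : Real.sqrt α ^ 2 = α := Real.sq_sqrt hα0.le
  have hbsq : Real.sqrt β ^ 2 = β := Real.sq_sqrt hβ0.le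
  have hk0 : 0 < k := lt_trans (by positivity) hk
  have hkk : 8 * α + 2 * β < 9 * k * (α * β * (Real.sqrt α * Real.sqrt β)) := by
    rw [← hrp]
    have h9 : (0:ℝ) < 9 * (α * β) ^ ((3:ℝ)/2) := by positivity
    rw [gt_iff_lt, div_lt_iff₀ h9] at hk
    nlinarith
  set s : ℝ := k / 2 * Real.sqrt (β / α) with hs_def
  have hc : Real.sqrt (β / α) = Real.sqrt β / Real.sqrt α := Real.sqrt_div' β hα0.le
  have hs0 : 0 < s := by rw [hs_def, hc]; positivity
  have hssq : s ^ 2 = k ^ 2 * β / (4 * α) := by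
    rw [hs_def, hc, mul_pow, div_pow, div_pow, hasq, hbsq]; ring
  have hw0 : 0 < Real.sqrt s := Real.sqrt_pos.mpr hs0
  have hwsq : Real.sqrt s ^ 2 = s := Real.sq_sqrt hs0.le
  have hs3 : 9 * α^2 * (s^2 * s) = 9/8 * k^3 * α * β * (Real.sqrt β / Real.sqrt α) := by
    rw [hssq, hs_def, hc]; field_simp; ring
  have hkey : Real.sqrt (s ^ 2 + k ^ 2) < 3 * α * (s * Real.sqrt s) := by
    apply (Real.sqrt_lt' (by positivity)).mpr
    have h3 : (3*α*(s*Real.sqrt s))^2 = 9*α^2*(s^2*s) := by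
      linear_combination (9*α^2*s^2) * hwsq
    rw [h3, hs3]
    have hlhs : s^2 + k^2 = k^2*(β+4*α)/(4*α) := by rw [hssq]; field_simp
    rw [hlhs, div_lt_iff₀ (by positivity : (0:ℝ) < 4*α)]
    have hrhs : 9/8*k^3*α*β*(Real.sqrt β/Real.sqrt α)*(4*α)
        = (9/2*k^3*α^2*β*Real.sqrt β)/Real.sqrt α := by ring
    rw [hrhs, lt_div_iff₀ ha0]
    have hmul := mul_lt_mul_of_pos_left hkk
      (show (0:ℝ) < k^2*Real.sqrt α/2 by positivity)
    calc k^2*(β+4*α)*Real.sqrt α = k^2*Real.sqrt α/2*(8*α+2*β) := by ring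
      _ < k^2*Real.sqrt α/2*(9*k*(α*β*(Real.sqrt α*Real.sqrt β))) := hmul
      _ = 9/2*k^3*α*β*Real.sqrt β*(Real.sqrt α^2) := by ring
      _ = 9/2*k^3*α^2*β*Real.sqrt β := by rw [hasq]; ring
  have heq3 : β * k ^ 2 / Real.sqrt s = 4 * α * (s * Real.sqrt s) := by
    have hβk : β * k ^ 2 = 4 * α * s ^ 2 := by rw [hssq]; field_simp
    rw [hβk, div_eq_iff (ne_of_gt hw0)]
    linear_combination (-(4*α*s)) * hwsq
  have heq2 : α * s ^ ((3 : ℝ) / 2) = α * (s * Real.sqrt s) := by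
    rw [show ((3:ℝ)/2) = 1 + 1/2 by norm_num, Real.rpow_add hs0, Real.rpow_one,
      ← Real.sqrt_eq_rpow]
  have h1 : Real.sqrt (s ^ 2 + k ^ 2)
      * Real.tanh (d * Real.sqrt (s ^ 2 + k ^ 2)) ≤ Real.sqrt (s ^ 2 + k ^ 2) := by
    have := my_tanh_le_one (d * Real.sqrt (s ^ 2 + k ^ 2))
    nlinarith [Real.sqrt_nonneg (s ^ 2 + k ^ 2)]
  rw [heq2, heq3]
  linarith [h1, hkey]
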